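/- The Hurwitz polyzeta functions, together with the constant function 1, are linearly independent over ℂ: in the ℂ-vector space of functions from the half-plane {z ∈ ℂ : Re z > 0} to ℂ, the family consisting of the constant function 1 together with the functions z ↦ ζ(k₁,…,k_r|z), indexed by all tuples (k₁,…,k_r) of integers with r ≥ 1, k_j ≥ 1 for all j, and k_r ≥ 2, is linearly independent over ℂ. -/

import Mathlib

set_option maxHeartbeats 1600000

/-- The Hurwitz polyzeta function `ζ(s₁,…,s_r|z)`, the sum over strictly increasing
tuples `0 ≤ n₁ < ⋯ < n_r` of non-negative integers of `∏ j, (z + n_j)^(-s_j)`. -/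
noncomputable def hurwitzPolyzeta (s : List ℂ) (z : ℂ) : ℂ :=
  ∑' n : {f : Fin s.length → ℕ // StrictMono f},
    ∏ j : Fin s.length, (z + (n.1 j : ℂ)) ^ (-(s.get j))

/-- Index type: tuples `(k₁,…,k_r)` of integers with `r ≥ 1`, each `k_j ≥ 1`,
and `k_r ≥ 2`. -/
def HurwitzIndex : Type :=
  {l : List ℕ // l ≠ [] ∧ (∀ k ∈ l, 1 ≤ k) ∧ 2 ≤ l.getLastD 0}

open Finset Polynomial

noncomputable section

/-- strictly monotone tuples -/
def Tup (r : ℕ) := {f : Fin r → ℕ // StrictMono f}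

def pterm (t : List ℕ) (x : ℝ) (n : Tup t.length) : ℝ :=
  ∏ j : Fin t.length, ((x + n.1 j) ^ (t.get j))⁻¹

def gz (t : List ℕ) (x : ℝ) : ℝ := ∑' n : Tup t.length, pterm t x n

instance : Unique (Tup 0) := by
  refine ⟨⟨⟨fun j => j.elim0, fun a => a.elim0⟩⟩, ?_⟩
  rintro ⟨f, hf⟩
  have : f = fun j => j.elim0 := funext fun j => j.elim0
  simp only [this]
  rfl

lemma pterm_nonneg (t : List ℕ) (x : ℝ) (hx : 0 ≤ x) (n : Tup t.length) :
    0 ≤ pterm t x n := by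
  refine Finset.prod_nonneg fun j _ => ?_
  positivity

lemma gz_nil (x : ℝ) : gz [] x = 1 := by
  rw [gz]
  rw [show (∑' n : Tup [].length, pterm [] x n) = ∑' n : Tup 0, pterm [] x n from rfl]
  rw [tsum_eq_single (default : Tup 0) (fun b hb => absurd (Subsingleton.elim b default) hb)]
  simp [pterm]


/-- Bernoulli-type bound : `m^ε ≤ (m+1)^ε - ε (m+1)^(ε-1)` -/
lemma rpow_succ_gap (ε : ℝ) (hε : 0 < ε) (hε1 : ε ≤ 1) (m : ℕ) :
    (m : ℝ) ^ ε ≤ ((m : ℝ) + 1) ^ ε - ε * ((m : ℝ) + 1) ^ (ε - 1) := by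
  have hM0 : (0:ℝ) < (m : ℝ) + 1 := by positivity
  set y : ℝ := (m : ℝ) / ((m:ℝ)+1) with hy
  have hy0 : 0 ≤ y := by positivity
  have hye0 : (0:ℝ) ≤ y ^ ε := Real.rpow_nonneg hy0 ε
  have hp : (1:ℝ) ≤ 1/ε := by rw [le_div_iff₀ hε]; linarith
  have hber := one_add_mul_self_le_rpow_one_add (s := y ^ ε - 1) (by linarith) hp
  have hcomp : ((1 + (y ^ ε - 1)) : ℝ) ^ (1/ε) = y := by
    have : (1 + (y ^ ε - 1) : ℝ) = y ^ ε := by ring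
    rw [this, ← Real.rpow_mul hy0, mul_one_div_cancel hε.ne', Real.rpow_one]
  rw [hcomp] at hber
  -- hber : 1 + 1/ε * (y^ε - 1) ≤ y
  have hyε : y ^ ε ≤ 1 + ε * (y - 1) := by
    have h1 : (1/ε) * (y ^ ε - 1) ≤ y - 1 := by linarith
    have h2 : y ^ ε - 1 ≤ ε * (y - 1) := by
      have := mul_le_mul_of_nonneg_left h1 hε.le
      calc y ^ ε - 1 = ε * ((1/ε) * (y ^ ε - 1)) := by field_simp
        _ ≤ ε * (y - 1) := this
    linarith
  have hmul := mul_le_mul_of_nonneg_left hyε (Real.rpow_nonneg hM0.le ε)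
  have hL : ((m:ℝ)+1) ^ ε * y ^ ε = (m : ℝ) ^ ε := by
    rw [← Real.mul_rpow hM0.le hy0, hy, mul_div_cancel₀ _ hM0.ne']
  have hR : ((m:ℝ)+1) ^ ε * (1 + ε * (y - 1)) =
      ((m:ℝ)+1) ^ ε - ε * ((m:ℝ)+1) ^ (ε - 1) := by
    have hy1 : y - 1 = -(1/((m:ℝ)+1)) := by
      rw [hy]; field_simp; ring
    have hpow : ((m:ℝ)+1) ^ (ε - 1) = ((m:ℝ)+1) ^ ε / ((m:ℝ)+1) := by
      rw [Real.rpow_sub hM0, Real.rpow_one]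
    rw [hy1, hpow]; field_simp; ring
  rw [hL, hR] at hmul; exact hmul

/-- harmonic-type partial sum bound -/
lemma harmonic_rpow_bound (ε : ℝ) (hε : 0 < ε) (hε1 : ε ≤ 1) (m : ℕ) :
    ∑ i ∈ range m, ((1:ℝ) + i)⁻¹ ≤ ε⁻¹ * (m : ℝ) ^ ε := by
  induction m with
  | zero => simp [Real.zero_rpow hε.ne']
  | succ m ih =>
    rw [Finset.sum_range_succ]
    have hgap := rpow_succ_gap ε hε hε1 m
    have h1 : ((1:ℝ) + m)⁻¹ ≤ ((m:ℝ) + 1) ^ (ε - 1) := by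
      have hM0 : (0:ℝ) < (m:ℝ) + 1 := by positivity
      have : ((m:ℝ)+1) ^ (ε - 1) = ((m:ℝ)+1) ^ ε / ((m:ℝ)+1) := by
        rw [Real.rpow_sub hM0, Real.rpow_one]
      rw [this, le_div_iff₀ hM0]
      have h2 : (1:ℝ) ≤ ((m:ℝ)+1) ^ ε := Real.one_le_rpow (by linarith) hε.le
      calc ((1:ℝ)+m)⁻¹ * ((m:ℝ)+1) = 1 := by
            rw [add_comm]; field_simp
        _ ≤ ((m:ℝ)+1) ^ ε := h2
    have key : ((1:ℝ) + m)⁻¹ ≤ ε⁻¹ * (((m:ℝ)+1) ^ ε - (m:ℝ) ^ ε) := by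
      have h3 : ε * ((m:ℝ)+1) ^ (ε-1) ≤ ((m:ℝ)+1) ^ ε - (m:ℝ) ^ ε := by linarith
      have h4 : ((m:ℝ)+1) ^ (ε-1) ≤ ε⁻¹ * (((m:ℝ)+1) ^ ε - (m:ℝ) ^ ε) := by
        rw [← mul_le_mul_iff_right₀ hε]
        calc ε * ((m:ℝ)+1)^(ε-1) ≤ ((m:ℝ)+1) ^ ε - (m:ℝ) ^ ε := h3
          _ = ε * (ε⁻¹ * (((m:ℝ)+1) ^ ε - (m:ℝ) ^ ε)) := by field_simp
      exact h1.trans h4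
    have : (((m:ℕ):ℝ) + 1) = (((m+1 : ℕ)):ℝ) := by push_cast; ring
    calc ∑ i ∈ range m, ((1:ℝ) + i)⁻¹ + ((1:ℝ)+m)⁻¹
        ≤ ε⁻¹ * (m:ℝ)^ε + ε⁻¹ * (((m:ℝ)+1)^ε - (m:ℝ)^ε) := by linarith
      _ = ε⁻¹ * (((m:ℝ)+1)) ^ ε := by ring
      _ = ε⁻¹ * ((m+1:ℕ) : ℝ) ^ ε := by rw [this]


lemma summable_pterm (t : List ℕ) (h1 : ∀ k ∈ t, 1 ≤ k)
    (h2 : ∀ h : t ≠ [], 2 ≤ t.getLast h) (x : ℝ) (hx : 1 ≤ x) :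
    Summable (pterm t x) := by
  have hx0 : (0:ℝ) ≤ x := by linarith
  cases t with
  | nil =>
    haveI : Finite (Tup ([] : List ℕ).length) :=
      @Finite.of_subsingleton _ (inferInstanceAs (Subsingleton (Tup 0)))
    exact Summable.of_finite
  | cons k t' =>
    set q := t'.length with hq
    set T := k :: t' with hT
    -- the last exponent is ≥ 2
    have hlast : 2 ≤ T.get (Fin.last q) := by
      have h := h2 (by simp [hT])
      rwa [List.getLast_eq_getElem] at h
    set ε : ℝ := 1/(2*(q+1)) with hε_def
    have hε : 0 < ε := by positivity
    have hε1 : ε ≤ 1 := by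
      rw [hε_def, div_le_one (by positivity)]
      have h0 : (0:ℝ) ≤ (q:ℝ) := Nat.cast_nonneg q
      linarith
    have hεq : ε * q ≤ 1/2 := by
      rw [hε_def]
      rw [div_mul_eq_mul_div, one_mul, div_le_div_iff₀ (by positivity) (by norm_num)]
      have : (q:ℝ) ≤ q + 1 := by linarith
      nlinarith
    set bigT : ℕ → ℝ := fun m => ε⁻¹^q * ((1:ℝ)+m) ^ (ε*q - 2) with hbigT
    have hbig_nonneg : ∀ m, 0 ≤ bigT m := by
      intro m; rw [hbigT]; positivity
    have hbig_summable : Summable bigT := by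
      apply Summable.mul_left
      have base : Summable (fun n : ℕ => ((1:ℝ)+n) ^ (-(3/2) : ℝ)) := by
        have h0 : Summable (fun n : ℕ => 1/(n:ℝ)^((3:ℝ)/2)) :=
          Real.summable_one_div_nat_rpow.mpr (by norm_num)
        have h1 := (summable_nat_add_iff 1).mpr h0
        apply h1.congr
        intro n
        rw [Real.rpow_neg (by positivity), ← one_div]
        push_cast
        ring_nf
      apply Summable.of_nonneg_of_le (fun m => by positivity) _ base
      intro m
      apply Real.rpow_le_rpow_of_exponent_le (by linarith [Nat.cast_nonneg (α := ℝ) m])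
      linarith
    apply summable_of_sum_le (fun n => pterm_nonneg T x hx0 n) (c := ∑' m, bigT m)
    intro u
    classical
    set lastv : Tup T.length → ℕ := fun n => n.1 (Fin.last q) with hlastv
    rw [← Finset.sum_fiberwise_of_maps_to (g := lastv) (t := u.image lastv)
      (fun i hi => Finset.mem_image_of_mem lastv hi) (pterm T x)]
    have fiberbound : ∀ m ∈ u.image lastv,
        ∑ n ∈ u.filter (fun n => lastv n = m), pterm T x n ≤ bigT m := by
      intro m _
      set fib := u.filter (fun n => lastv n = m) with hfib
      have hmem : ∀ n ∈ fib, lastv n = m := by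
        intro n hn; exact (Finset.mem_filter.mp hn).2
      set ρ : Tup T.length → (Fin q → ℕ) := fun n j => n.1 j.castSucc with hρ
      have hρlt : ∀ n ∈ fib, ∀ j : Fin q, ρ n j < m := by
        intro n hn j
        rw [← hmem n hn]
        exact n.2 (Fin.castSucc_lt_last j)
      -- pointwise bound
      have ptboundA : ∀ n ∈ fib, pterm T x n ≤
          (((1:ℝ)+m)^2)⁻¹ * ∏ j : Fin q, ((1:ℝ) + ρ n j)⁻¹ := by
        intro n hn
        rw [pterm]
        rw [show (∏ j : Fin T.length, ((x + n.1 j) ^ (T.get j))⁻¹)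
            = (∏ j : Fin q, ((x + n.1 j.castSucc) ^ (T.get j.castSucc))⁻¹)
              * ((x + n.1 (Fin.last q)) ^ (T.get (Fin.last q)))⁻¹ from
          Fin.prod_univ_castSucc _]
        rw [mul_comm]
        apply mul_le_mul
        · -- last factor
          rw [show (n.1 (Fin.last q)) = m from hmem n hn]
          have hb : ((1:ℝ)+m)^2 ≤ (x + m) ^ T.get (Fin.last q) := by
            calc ((1:ℝ)+m)^2 ≤ (x+m)^2 := by gcongr <;> linarith
              _ ≤ (x+m) ^ T.get (Fin.last q) := by
                  apply pow_le_pow_right₀ (by linarith [Nat.cast_nonneg (α := ℝ) m]) hlast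
          exact inv_anti₀ (by positivity) hb
        · -- castSucc factors
          apply Finset.prod_le_prod
          · intro j _; positivity
          · intro j _
            have hk1 : 1 ≤ T.get j.castSucc := by
              apply h1
              rw [List.get_eq_getElem]
              exact List.getElem_mem _
            have hb : (1:ℝ) + n.1 j.castSucc ≤ (x + n.1 j.castSucc) ^ T.get j.castSucc := by
              calc (1:ℝ) + n.1 j.castSucc ≤ (x + n.1 j.castSucc)^1 := by
                    rw [pow_one]; linarith
                _ ≤ _ := by
                    apply pow_le_pow_right₀ (by linarith [Nat.cast_nonneg (α := ℝ) (n.1 j.castSucc)]) hk1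
            exact inv_anti₀ (by positivity) hb
        · apply Finset.prod_nonneg; intro j _; positivity
        · positivity
      have stepA : ∑ n ∈ fib, pterm T x n ≤
          (((1:ℝ)+m)^2)⁻¹ * ∑ n ∈ fib, ∏ j : Fin q, ((1:ℝ) + ρ n j)⁻¹ := by
        rw [Finset.mul_sum]
        exact Finset.sum_le_sum ptboundA
      -- step B
      have hinj : Set.InjOn ρ fib := by
        intro a ha b hb hab
        have ha' := hmem a ha; have hb' := hmem b hb
        apply Subtype.ext; funext j
        refine Fin.lastCases ?_ ?_ j
        · rw [show a.1 (Fin.last q) = lastv a from rfl, ha',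
              show b.1 (Fin.last q) = lastv b from rfl, hb']
        · intro i
          exact congrFun hab i
      have stepB : ∑ n ∈ fib, ∏ j : Fin q, ((1:ℝ) + ρ n j)⁻¹ ≤
          (∑ i ∈ range m, ((1:ℝ) + i)⁻¹)^q := by
        rw [show (∑ n ∈ fib, ∏ j : Fin q, ((1:ℝ) + ρ n j)⁻¹)
            = ∑ v ∈ fib.image ρ, ∏ j : Fin q, ((1:ℝ) + v j)⁻¹ from
          (Finset.sum_image (g := ρ) (f := fun v => ∏ j : Fin q, ((1:ℝ) + v j)⁻¹)
            (fun a ha b hb => hinj ha hb)).symm]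
        have hsub : fib.image ρ ⊆ Fintype.piFinset (fun _ : Fin q => range m) := by
          intro v hv
          obtain ⟨n, hn, rfl⟩ := Finset.mem_image.mp hv
          rw [Fintype.mem_piFinset]
          intro j
          exact Finset.mem_range.mpr (hρlt n hn j)
        calc ∑ v ∈ fib.image ρ, ∏ j : Fin q, ((1:ℝ) + v j)⁻¹
            ≤ ∑ v ∈ Fintype.piFinset (fun _ : Fin q => range m),
                ∏ j : Fin q, ((1:ℝ) + v j)⁻¹ := by
              apply Finset.sum_le_sum_of_subset_of_nonneg hsub
              intro v _ _
              apply Finset.prod_nonneg; intro j _; positivity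
          _ = ∏ _j : Fin q, ∑ i ∈ range m, ((1:ℝ) + i)⁻¹ :=
              (Finset.prod_univ_sum (fun _ : Fin q => range m) (fun _ i => ((1:ℝ)+(i:ℝ))⁻¹)).symm
          _ = (∑ i ∈ range m, ((1:ℝ) + i)⁻¹)^q := by
              rw [Finset.prod_const, Finset.card_univ, Fintype.card_fin]
      -- step C
      have hH := harmonic_rpow_bound ε hε hε1 m
      have hHnn : (0:ℝ) ≤ ∑ i ∈ range m, ((1:ℝ) + i)⁻¹ := by
        apply Finset.sum_nonneg; intro i _; positivity
      have stepC : (((1:ℝ)+m)^2)⁻¹ * (∑ i ∈ range m, ((1:ℝ) + i)⁻¹)^q ≤ bigT m := by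
        have c1 : (∑ i ∈ range m, ((1:ℝ) + i)⁻¹)^q ≤ (ε⁻¹ * (m:ℝ)^ε)^q :=
          pow_le_pow_left₀ hHnn hH q
        have c2 : (ε⁻¹ * (m:ℝ)^ε)^q = ε⁻¹^q * ((m:ℝ)^ε)^q := mul_pow _ _ _
        have c3 : ((m:ℝ)^ε)^q = (m:ℝ)^(ε*q) := by
          rw [← Real.rpow_natCast ((m:ℝ)^ε) q, ← Real.rpow_mul (by positivity)]
        have c4 : (m:ℝ)^(ε*q) ≤ ((1:ℝ)+m)^(ε*q) := by
          apply Real.rpow_le_rpow (by positivity) (by linarith) (by positivity)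
        have c5 : (((1:ℝ)+m)^2)⁻¹ = ((1:ℝ)+m)^(-(2:ℝ)) := by
          rw [Real.rpow_neg (by positivity)]
          norm_num [Real.rpow_natCast]
        calc (((1:ℝ)+m)^2)⁻¹ * (∑ i ∈ range m, ((1:ℝ) + i)⁻¹)^q
            ≤ (((1:ℝ)+m)^2)⁻¹ * (ε⁻¹^q * ((1:ℝ)+m)^(ε*q)) := by
              rw [c2, c3] at c1
              apply mul_le_mul_of_nonneg_left _ (by positivity)
              calc (∑ i ∈ range m, ((1:ℝ) + i)⁻¹)^q ≤ ε⁻¹^q * ((m:ℝ))^(ε*q) := c1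
                _ ≤ ε⁻¹^q * ((1:ℝ)+m)^(ε*q) := by
                    apply mul_le_mul_of_nonneg_left c4 (by positivity)
          _ = ε⁻¹^q * (((1:ℝ)+m)^(-(2:ℝ)) * ((1:ℝ)+m)^(ε*q)) := by rw [c5]; ring
          _ = bigT m := by
              rw [hbigT, ← Real.rpow_add (by positivity)]
              ring_nf
      calc ∑ n ∈ fib, pterm T x n
          ≤ (((1:ℝ)+m)^2)⁻¹ * ∑ n ∈ fib, ∏ j : Fin q, ((1:ℝ) + ρ n j)⁻¹ := stepA
        _ ≤ (((1:ℝ)+m)^2)⁻¹ * (∑ i ∈ range m, ((1:ℝ) + i)⁻¹)^q := by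
            apply mul_le_mul_of_nonneg_left stepB (by positivity)
        _ ≤ bigT m := stepC
    calc ∑ m ∈ u.image lastv, ∑ n ∈ u.filter (fun n => lastv n = m), pterm T x n
        ≤ ∑ m ∈ u.image lastv, bigT m := Finset.sum_le_sum fiberbound
      _ ≤ ∑' m, bigT m := hbig_summable.sum_le_tsum _ (fun m _ => hbig_nonneg m)

def Adm (t : List ℕ) : Prop := (∀ m ∈ t, 1 ≤ m) ∧ ∀ h : t ≠ [], 2 ≤ t.getLast h

lemma Adm.nil : Adm [] := ⟨by simp, fun h => absurd rfl h⟩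

lemma Adm.tail {k : ℕ} {t : List ℕ} (h : Adm (k :: t)) : Adm t := by
  constructor
  · intro m hm; exact h.1 m (List.mem_cons_of_mem _ hm)
  · intro ht
    have := h.2 (List.cons_ne_nil k t)
    rwa [List.getLast_cons ht] at this

lemma Adm.head {k : ℕ} {t : List ℕ} (h : Adm (k :: t)) : 1 ≤ k :=
  h.1 k List.mem_cons_self

lemma Adm.drop {t : List ℕ} (h : Adm t) (j : ℕ) : Adm (t.drop j) := by
  induction j generalizing t with
  | zero => simpa using h
  | succ j ih =>
    cases t with
    | nil => simpa using Adm.nil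
    | cons k t' => simpa using ih (h.tail)

lemma summable_pterm' {t : List ℕ} (h : Adm t) {x : ℝ} (hx : 1 ≤ x) :
    Summable (pterm t x) := summable_pterm t h.1 h.2 x hx


/-- the equiv realizing tuples with first entry 0 -/
def e0 (r : ℕ) : Tup r ≃ {n : Tup (r+1) // n.1 0 = 0} where
  toFun h := ⟨⟨Fin.cons 0 (fun j => h.1 j + 1), by
    intro a b hab
    rcases Fin.eq_zero_or_eq_succ a with ha | ⟨i, rfl⟩
    · subst ha
      rcases Fin.eq_zero_or_eq_succ b with hb | ⟨j, rfl⟩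
      · exact absurd hab (by subst hb; exact lt_irrefl _)
      · simp only [Fin.cons_zero, Fin.cons_succ]; omega
    · rcases Fin.eq_zero_or_eq_succ b with hb | ⟨j, rfl⟩
      · exact absurd hab (by subst hb; simp [Fin.lt_def])
      · simp only [Fin.cons_succ]
        have hij : i < j := by rwa [Fin.succ_lt_succ_iff] at hab
        have := h.2 hij; omega⟩, by simp⟩
  invFun n := ⟨fun j => n.1.1 j.succ - 1, by
    intro a b hab
    show n.1.1 a.succ - 1 < n.1.1 b.succ - 1
    have h1 : n.1.1 a.succ < n.1.1 b.succ := n.1.2 (by rwa [Fin.succ_lt_succ_iff])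
    have h0 : n.1.1 0 < n.1.1 a.succ := n.1.2 (Fin.succ_pos a)
    have := n.2
    omega⟩
  left_inv h := by
    apply Subtype.ext; funext j
    show (Fin.cons 0 (fun j => h.1 j + 1) : Fin _ → ℕ) j.succ - 1 = h.1 j
    simp [Fin.cons_succ]
  right_inv n := by
    apply Subtype.ext; apply Subtype.ext; funext j
    rcases Fin.eq_zero_or_eq_succ j with hj | ⟨i, rfl⟩
    · subst hj; simpa [Fin.cons_zero] using n.2.symm
    · simp only [Fin.cons_succ]
      have h0 : n.1.1 0 < n.1.1 i.succ := n.1.2 (Fin.succ_pos i)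
      have := n.2
      omega

/-- the equiv realizing tuples with first entry positive -/
def e1 (r : ℕ) : Tup (r+1) ≃ {n : Tup (r+1) // ¬ n.1 0 = 0} where
  toFun h := ⟨⟨fun j => h.1 j + 1, by
    intro a b hab
    show h.1 a + 1 < h.1 b + 1
    have := h.2 hab; omega⟩, by simp⟩
  invFun n := ⟨fun j => n.1.1 j - 1, by
    intro a b hab
    show n.1.1 a - 1 < n.1.1 b - 1
    have h1 : n.1.1 a < n.1.1 b := n.1.2 hab
    have h0 : n.1.1 0 ≤ n.1.1 a := n.1.2.monotone (Fin.zero_le a)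
    have h2 := n.2
    omega⟩
  left_inv h := by
    apply Subtype.ext; funext j
    show (h.1 j + 1) - 1 = h.1 j
    omega
  right_inv n := by
    apply Subtype.ext; apply Subtype.ext; funext j
    show (n.1.1 j - 1) + 1 = n.1.1 j
    have h0 : n.1.1 0 ≤ n.1.1 j := n.1.2.monotone (Fin.zero_le j)
    have h2 := n.2
    omega

lemma pterm_succ (k : ℕ) (t' : List ℕ) (x : ℝ) (n : Tup (t'.length + 1)) :
    pterm (k :: t') x n =
      ((x + (n.1 0 : ℝ)) ^ k)⁻¹ *
        ∏ j : Fin t'.length, ((x + (n.1 j.succ : ℝ)) ^ (t'.get j))⁻¹ := by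
  show (∏ j : Fin (t'.length + 1), ((x + (n.1 j : ℝ)) ^ ((k :: t').get j))⁻¹) = _
  rw [Fin.prod_univ_succ]
  rfl

/-- The fundamental recursion. -/
lemma gz_rec (k : ℕ) (t' : List ℕ) (hadm : Adm (k :: t')) (x : ℝ) (hx : 1 ≤ x) :
    gz (k :: t') x = ((x ^ k)⁻¹) * gz t' (x + 1) + gz (k :: t') (x + 1) := by
  classical
  set q := t'.length with hq
  have hsum : Summable (pterm (k :: t') x) := summable_pterm' hadm hx
  have hx1 : (1:ℝ) ≤ x + 1 := by linarith
  have hsum1 : Summable (pterm (k :: t') (x+1)) := summable_pterm' hadm hx1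
  have hsum1' : Summable (pterm t' (x+1)) := summable_pterm' hadm.tail hx1
  set s : Set (Tup (q+1)) := {n | n.1 0 = 0} with hs
  have hsplit := Summable.tsum_add_tsum_compl (f := fun n : Tup (q+1) => pterm (k :: t') x n) (s := s)
    (hsum.subtype s) (hsum.subtype sᶜ)
  -- first part
  have part1 : (∑' (n : s), pterm (k :: t') x n.1) = (x ^ k)⁻¹ * gz t' (x+1) := by
    have congr1 : (∑' (n : s), pterm (k :: t') x n.1)
        = ∑' (n : {n : Tup (q+1) // n.1 0 = 0}), pterm (k :: t') x n.1 := rfl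
    have he : ∀ h : Tup q, pterm (k :: t') x ((e0 q) h).1 = (x^k)⁻¹ * pterm t' (x+1) h := by
      intro h
      rw [pterm_succ]
      have hv0 : ((e0 q) h).1.1 0 = 0 := rfl
      have hvs : ∀ j : Fin q, ((e0 q) h).1.1 j.succ = h.1 j + 1 := fun j => by
        show (Fin.cons 0 (fun j => h.1 j + 1) : Fin _ → ℕ) j.succ = h.1 j + 1
        simp [Fin.cons_succ]
      rw [hv0]
      have hfac : ∀ j : Fin q, ((x + (((e0 q) h).1.1 j.succ : ℝ)) ^ (t'.get j))⁻¹
          = (((x+1) + (h.1 j : ℝ)) ^ (t'.get j))⁻¹ := by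
        intro j
        rw [hvs j]
        have : (x + ((h.1 j + 1 : ℕ) : ℝ)) = (x + 1) + (h.1 j : ℝ) := by push_cast; ring
        rw [this]
      rw [Finset.prod_congr rfl (fun j _ => hfac j)]
      rw [pterm]
      norm_num
      exact Or.inl rfl
    calc (∑' (n : s), pterm (k :: t') x n.1)
        = ∑' (n : {n : Tup (q+1) // n.1 0 = 0}), pterm (k :: t') x n.1 := congr1
      _ = ∑' (h : Tup q), pterm (k :: t') x ((e0 q) h).1 :=
          ((e0 q).tsum_eq (fun n : {n : Tup (q+1) // n.1 0 = 0} => pterm (k :: t') x n.1)).symm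
      _ = ∑' (h : Tup q), (x^k)⁻¹ * pterm t' (x+1) h := tsum_congr he
      _ = (x^k)⁻¹ * gz t' (x+1) := by rw [tsum_mul_left]; rfl
  -- second part
  have part2 : (∑' (n : ↑sᶜ), pterm (k :: t') x n.1) = gz (k :: t') (x+1) := by
    have congr2 : (∑' (n : ↑sᶜ), pterm (k :: t') x n.1)
        = ∑' (n : {n : Tup (q+1) // ¬ n.1 0 = 0}), pterm (k :: t') x n.1 := rfl
    have he : ∀ h : Tup (q+1), pterm (k :: t') x ((e1 q) h).1 = pterm (k :: t') (x+1) h := by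
      intro h
      rw [pterm, pterm]
      apply Finset.prod_congr rfl
      intro j _
      have h1 : ((e1 q) h).1.1 j = h.1 j + 1 := rfl
      rw [h1]
      have : (x + ((h.1 j + 1 : ℕ) : ℝ)) = (x + 1) + (h.1 j : ℝ) := by push_cast; ring
      rw [this]
    calc (∑' (n : ↑sᶜ), pterm (k :: t') x n.1)
        = ∑' (n : {n : Tup (q+1) // ¬ n.1 0 = 0}), pterm (k :: t') x n.1 := congr2
      _ = ∑' (h : Tup (q+1)), pterm (k :: t') x ((e1 q) h).1 :=
          ((e1 q).tsum_eq (fun n : {n : Tup (q+1) // ¬ n.1 0 = 0} => pterm (k :: t') x n.1)).symm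
      _ = ∑' (h : Tup (q+1)), pterm (k :: t') (x+1) h := tsum_congr he
      _ = gz (k :: t') (x+1) := rfl
  rw [part1, part2] at hsplit
  rw [gz]
  exact hsplit.symm

/-- complex version of gz -/
def fz (t : List ℕ) (x : ℝ) : ℂ := (gz t x : ℂ)

lemma fz_nil (x : ℝ) : fz [] x = 1 := by rw [fz, gz_nil]; norm_num

lemma fz_rec (k : ℕ) (t' : List ℕ) (hadm : Adm (k :: t')) (x : ℝ) (hx : 1 ≤ x) :
    fz (k :: t') x = (((x:ℂ) ^ k)⁻¹) * fz t' (x + 1) + fz (k :: t') (x + 1) := by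
  rw [fz, gz_rec k t' hadm x hx]
  push_cast
  rfl


/-- the bridge to `hurwitzPolyzeta` -/
lemma hurwitz_eq (t : List ℕ) (hadm : Adm t) (x : ℝ) (hx : 1 ≤ x) :
    hurwitzPolyzeta (t.map (fun k : ℕ => (k : ℂ))) (x : ℂ) = fz t x := by
  classical
  set s : List ℂ := t.map (fun k : ℕ => (k : ℂ)) with hs
  have hlen : s.length = t.length := List.length_map _
  have hx0 : (0:ℝ) < x := by linarith
  have hmono : ∀ f : Fin s.length → ℕ,
      StrictMono f ↔ StrictMono (f ∘ Fin.cast hlen.symm) := by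
    intro f
    constructor
    · intro hf a b hab
      apply hf
      rw [Fin.lt_def] at hab ⊢
      simpa using hab
    · intro hf a b hab
      have h2 : ((Fin.cast hlen) a) < ((Fin.cast hlen) b) := by
        rw [Fin.lt_def] at hab ⊢
        simpa using hab
      have := hf h2
      simpa using this
  set e : {f : Fin s.length → ℕ // StrictMono f} ≃ Tup t.length :=
    Equiv.subtypeEquiv (Equiv.arrowCongr (finCongr hlen) (Equiv.refl ℕ))
      (fun f => hmono f) with he
  have hev : ∀ (n : {f : Fin s.length → ℕ // StrictMono f}) (j : Fin s.length),
      (e n).1 (Fin.cast hlen j) = n.1 j := by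
    intro n j
    show n.1 ((finCongr hlen).symm (finCongr hlen j)) = n.1 j
    rw [Equiv.symm_apply_apply]
  have hterm : ∀ n : {f : Fin s.length → ℕ // StrictMono f},
      (∏ j : Fin s.length, ((x:ℂ) + (n.1 j : ℂ)) ^ (-(s.get j)))
        = ((pterm t x (e n) : ℝ) : ℂ) := by
    intro n
    rw [pterm, Complex.ofReal_prod]
    rw [← Fintype.prod_equiv (finCongr hlen)
      (fun j : Fin s.length => ((x:ℂ) + (n.1 j : ℂ)) ^ (-(s.get j)))
      (fun j' : Fin t.length => ((((x + (((e n).1 j' : ℕ)) : ℝ) ^ (t.get j'))⁻¹ : ℝ) : ℂ))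
      ?_]
    intro j
    have hsget : s.get j = ((t.get (Fin.cast hlen j) : ℕ) : ℂ) := by
      rw [List.get_eq_getElem, List.get_eq_getElem]
      simp only [hs]
      rw [List.getElem_map]
      congr 1
    have hbase : ((x:ℂ) + ((n.1 j : ℕ) : ℂ)) = (((x + ((n.1 j : ℕ) : ℝ)) : ℝ) : ℂ) := by
      push_cast; ring
    rw [hsget, hbase, Complex.cpow_neg, Complex.cpow_natCast,
      ← Complex.ofReal_pow, ← Complex.ofReal_inv]
    rw [show (finCongr hlen) j = Fin.cast hlen j from rfl, hev n j]
  rw [hurwitzPolyzeta]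
  rw [tsum_congr hterm, ← Complex.ofReal_tsum]
  rw [fz, gz]
  norm_cast
  exact e.tsum_eq (pterm t x)

/-- shift expansion -/
lemma fz_shift (t : List ℕ) (hadm : Adm t) (x : ℝ) (hx : 1 ≤ x) :
    fz t (x + 1) = ∑ j ∈ range (t.length + 1),
      ((-1:ℂ))^j * (((x:ℂ) ^ ((t.take j).sum))⁻¹) * fz (t.drop j) x := by
  induction t generalizing x with
  | nil =>
    simp [fz_nil]
  | cons k t' ih =>
    have hrec := fz_rec k t' hadm x hx
    have hih := ih hadm.tail x hx
    have hstep : fz (k :: t') (x+1) = fz (k :: t') x - ((x:ℂ)^k)⁻¹ * fz t' (x+1) := by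
      rw [hrec]; ring
    rw [hstep, hih]
    rw [show (k :: t').length + 1 = (t'.length + 1) + 1 from rfl]
    rw [Finset.sum_range_succ' (fun j => ((-1:ℂ))^j * (((x:ℂ) ^ (((k :: t').take j).sum))⁻¹)
      * fz ((k :: t').drop j) x) (t'.length + 1)]
    have h0 : ((-1:ℂ))^0 * (((x:ℂ) ^ (((k :: t').take 0).sum))⁻¹) * fz ((k :: t').drop 0) x
        = fz (k :: t') x := by norm_num
    rw [h0]
    rw [Finset.mul_sum]
    have hterm : ∀ j ∈ range (t'.length + 1),
        ((-1:ℂ))^(j+1) * (((x:ℂ) ^ (((k :: t').take (j+1)).sum))⁻¹) * fz ((k :: t').drop (j+1)) x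
          = -(((x:ℂ)^k)⁻¹ * (((-1:ℂ))^j * (((x:ℂ) ^ ((t'.take j).sum))⁻¹) * fz (t'.drop j) x)) := by
      intro j _
      have htake : ((k :: t').take (j+1)).sum = k + (t'.take j).sum := by
        rw [List.take_succ_cons]; simp
      have hdrop : (k :: t').drop (j+1) = t'.drop j := rfl
      rw [htake, hdrop, pow_add ((x:ℂ)) k ((t'.take j).sum), mul_inv]
      ring
    rw [Finset.sum_congr rfl hterm, Finset.sum_neg_distrib]
    ring

def denpoly (M : ℕ) (a : ℕ → ℕ) : Polynomial ℂ :=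
  ∏ j ∈ range M, (Polynomial.X + Polynomial.C (j:ℂ))^(a j)

def Nice (B : ℝ → ℂ) : Prop := ∃ (p : Polynomial ℂ) (M : ℕ) (a : ℕ → ℕ),
  ∀ x : ℝ, 1 < x → B x = p.eval (x:ℂ) / (denpoly M a).eval (x:ℂ)

lemma denpoly_eval (M : ℕ) (a : ℕ → ℕ) (z : ℂ) :
    (denpoly M a).eval z = ∏ j ∈ range M, (z + j)^(a j) := by
  rw [denpoly, eval_prod]
  apply Finset.prod_congr rfl
  intro j _
  simp

lemma shift_ne_zero (x : ℝ) (hx : 0 < x) (j : ℕ) : ((x:ℂ) + j) ≠ 0 := by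
  intro h
  have := congrArg Complex.re h
  simp only [Complex.add_re, Complex.ofReal_re, Complex.natCast_re, Complex.zero_re] at this
  have : x + (j:ℝ) = 0 := by exact_mod_cast this
  have hj : (0:ℝ) ≤ j := Nat.cast_nonneg j
  linarith

lemma denpoly_eval_ne_zero (M : ℕ) (a : ℕ → ℕ) (x : ℝ) (hx : 0 < x) :
    (denpoly M a).eval (x:ℂ) ≠ 0 := by
  rw [denpoly_eval]
  apply Finset.prod_ne_zero_iff.mpr
  intro j _
  exact pow_ne_zero _ (shift_ne_zero x hx j)

lemma denpoly_eval_ne_zero_neg (M : ℕ) (a : ℕ → ℕ) (j₀ : ℕ) (hj : M ≤ j₀) :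
    (denpoly M a).eval (-(j₀:ℂ)) ≠ 0 := by
  rw [denpoly_eval]
  apply Finset.prod_ne_zero_iff.mpr
  intro j hj'
  apply pow_ne_zero
  intro h
  have : (j : ℂ) = (j₀ : ℂ) := by linear_combination h
  have : j = j₀ := by exact_mod_cast this
  rw [Finset.mem_range] at hj'
  omega

lemma denpoly_ext (M M' : ℕ) (a : ℕ → ℕ) (h : M ≤ M') :
    denpoly M a = denpoly M' (fun j => if j < M then a j else 0) := by
  rw [denpoly, denpoly]
  calc ∏ j ∈ range M, (Polynomial.X + Polynomial.C (j:ℂ))^(a j)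
      = ∏ j ∈ range M, (Polynomial.X + Polynomial.C (j:ℂ))^(if j < M then a j else 0) := by
        apply Finset.prod_congr rfl
        intro j hj
        rw [if_pos (Finset.mem_range.mp hj)]
    _ = ∏ j ∈ range M', (Polynomial.X + Polynomial.C (j:ℂ))^(if j < M then a j else 0) := by
        apply Finset.prod_subset (Finset.range_subset_range.mpr h)
        intro j _ hj
        have hj' : ¬ j < M := by simpa using hj
        rw [if_neg hj', pow_zero]

lemma denpoly_mul (M N : ℕ) (a b : ℕ → ℕ) :
    denpoly M a * denpoly N b =
      denpoly (max M N) (fun j => (if j < M then a j else 0) + (if j < N then b j else 0)) := by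
  rw [denpoly_ext M (max M N) a (le_max_left _ _), denpoly_ext N (max M N) b (le_max_right _ _)]
  rw [denpoly, denpoly, denpoly, ← Finset.prod_mul_distrib]
  apply Finset.prod_congr rfl
  intro j _
  rw [← pow_add]

lemma Nice.add {B C : ℝ → ℂ} (hB : Nice B) (hC : Nice C) : Nice (fun x => B x + C x) := by
  obtain ⟨p, M, a, hp⟩ := hB
  obtain ⟨q, N, b, hq⟩ := hC
  refine ⟨p * denpoly N b + q * denpoly M a, max M N,
    (fun j => (if j < M then a j else 0) + (if j < N then b j else 0)), ?_⟩
  intro x hx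
  have hx0 : (0:ℝ) < x := by linarith
  have hMa := denpoly_eval_ne_zero M a x hx0
  have hNb := denpoly_eval_ne_zero N b x hx0
  show B x + C x = _
  rw [hp x hx, hq x hx, ← denpoly_mul, eval_add, eval_mul, eval_mul, eval_mul]
  field_simp

lemma Nice.mul {B C : ℝ → ℂ} (hB : Nice B) (hC : Nice C) : Nice (fun x => B x * C x) := by
  obtain ⟨p, M, a, hp⟩ := hB
  obtain ⟨q, N, b, hq⟩ := hC
  refine ⟨p * q, max M N,
    (fun j => (if j < M then a j else 0) + (if j < N then b j else 0)), ?_⟩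
  intro x hx
  have hx0 : (0:ℝ) < x := by linarith
  have hMa := denpoly_eval_ne_zero M a x hx0
  have hNb := denpoly_eval_ne_zero N b x hx0
  show B x * C x = _
  rw [hp x hx, hq x hx, ← denpoly_mul, eval_mul, eval_mul]
  field_simp

lemma Nice.const (c : ℂ) : Nice (fun _ => c) :=
  ⟨Polynomial.C c, 0, fun _ => 0, fun x _ => by simp [denpoly]⟩

lemma Nice.zero : Nice (fun _ => (0:ℂ)) := Nice.const 0

lemma Nice.neg {B : ℝ → ℂ} (hB : Nice B) : Nice (fun x => -(B x)) := by
  have := hB.mul (Nice.const (-1))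
  apply Exists.imp _ this
  intro p h
  obtain ⟨M, a, h⟩ := h
  exact ⟨M, a, fun x hx => by rw [← h x hx]; ring⟩

lemma Nice.sub {B C : ℝ → ℂ} (hB : Nice B) (hC : Nice C) : Nice (fun x => B x - C x) := by
  have := hB.add hC.neg
  apply Exists.imp _ this
  intro p h
  obtain ⟨M, a, h⟩ := h
  exact ⟨M, a, fun x hx => by rw [← h x hx]; ring⟩

lemma Nice.shift {B : ℝ → ℂ} (hB : Nice B) : Nice (fun x => B (x + 1)) := by
  obtain ⟨p, M, a, hp⟩ := hB
  refine ⟨p.comp (Polynomial.X + Polynomial.C 1), M + 1,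
    (fun j => if j = 0 then 0 else a (j - 1)), ?_⟩
  intro x hx
  have hx1 : (1:ℝ) < x + 1 := by linarith
  show B (x + 1) = _
  rw [hp (x+1) hx1]
  rw [eval_comp]
  congr 1
  · congr 1
    push_cast
    simp
  · rw [denpoly_eval, denpoly_eval]
    rw [Finset.prod_range_succ']
    have h0 : ((x:ℂ) + ((0:ℕ):ℂ)) ^ (if (0:ℕ) = 0 then 0 else a (0-1)) = 1 := by simp
    rw [h0, mul_one]
    apply Finset.prod_congr rfl
    intro k _
    rw [if_neg (Nat.succ_ne_zero k), Nat.add_sub_cancel]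
    congr 1
    push_cast
    ring

lemma Nice.xpow_inv (k : ℕ) : Nice (fun x : ℝ => (((x:ℂ))^k)⁻¹) := by
  refine ⟨1, 1, fun _ => k, ?_⟩
  intro x hx
  rw [denpoly_eval]
  simp

lemma Nice.finset_sum {ι : Type*} (s : Finset ι) (f : ι → ℝ → ℂ)
    (hf : ∀ i ∈ s, Nice (f i)) : Nice (fun x => ∑ i ∈ s, f i x) := by
  classical
  induction s using Finset.induction with
  | empty => simpa using Nice.zero
  | @insert i s' hni ih =>
    rw [show (fun x => ∑ j ∈ insert i s', f j x)
        = (fun x => f i x + ∑ j ∈ s', f j x) from funext fun x => Finset.sum_insert hni]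
    exact (hf i (Finset.mem_insert_self i s')).add
      (ih fun j hj => hf j (Finset.mem_insert_of_mem hj))

/-- two complex polynomials agreeing on reals > 1 agree -/
lemma poly_eq_of_eval (P Q : Polynomial ℂ)
    (h : ∀ x : ℝ, 1 < x → P.eval (x:ℂ) = Q.eval (x:ℂ)) : P = Q := by
  have hsub : P - Q = 0 := by
    apply Polynomial.eq_zero_of_infinite_isRoot
    apply Set.Infinite.mono (s := (fun x : ℝ => (x:ℂ)) '' (Set.Ioi 1))
    · rintro z ⟨x, hx, rfl⟩
      simp only [Set.mem_setOf_eq, IsRoot.def, eval_sub]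
      rw [h x hx]
      ring
    · exact Set.Infinite.image (Complex.ofReal_injective.injOn) (Set.Ioi_infinite 1)
  linear_combination hsub

lemma top_vanish (K : ℕ) (c : ℕ → ℂ) (B : ℝ → ℂ) (hB : Nice B)
    (heq : ∀ x : ℝ, 1 < x →
      (∑ k ∈ range (K+2), c k * (((x:ℂ))^k)⁻¹) + (B x - B (x+1)) = 0) :
    c (K+1) = 0 := by
  classical
  obtain ⟨p, M, a, hrep⟩ := hB
  set n : ℕ := M + 2 with hn
  set j₀ : ℕ := M + 1 with hj₀
  set f : ℝ → ℂ := fun y => ∑ k ∈ range (K+2), c k * (((y:ℂ))^k)⁻¹ with hf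
  have hBstep : ∀ x : ℝ, 1 < x → B (x+1) - B x = f x := by
    intro x hx
    have := heq x hx
    rw [hf]
    linear_combination -this
  have htel : ∀ (m : ℕ) (x : ℝ), 1 < x →
      B (x + m) - B x = ∑ i ∈ range m, f (x + i) := by
    intro m
    induction m with
    | zero => intro x hx; simp
    | succ m ih =>
      intro x hx
      have hxm : (1:ℝ) < x + m := by
        have : (0:ℝ) ≤ m := Nat.cast_nonneg m
        linarith
      have h1 := hBstep (x + m) hxm
      have h2 := ih x hx
      rw [Finset.sum_range_succ]
      have hcast : x + ((m+1 : ℕ):ℝ) = (x + (m:ℕ)) + 1 := by push_cast; ring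
      rw [hcast, ← h2]
      linear_combination h1
  set DP : Polynomial ℂ := denpoly M a with hDP
  set DPn : Polynomial ℂ := DP.comp (Polynomial.X + Polynomial.C (n:ℂ)) with hDPn
  set Q : ℕ → Polynomial ℂ := fun i => (Polynomial.X + Polynomial.C (i:ℂ))^(K+1) with hQ
  set S : ℕ → Polynomial ℂ :=
    fun i => ∑ k ∈ range (K+2), Polynomial.C (c k) * (Polynomial.X + Polynomial.C (i:ℂ))^(K+1-k) with hS
  set P1 : Polynomial ℂ :=
    (p.comp (Polynomial.X + Polynomial.C (n:ℂ)) * DP - p * DPn) * ∏ i ∈ range n, Q i with hP1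
  set P2 : Polynomial ℂ :=
    ∑ i ∈ range n, S i * DP * DPn * ∏ i' ∈ (range n).erase i, Q i' with hP2
  -- evaluation identities
  have hDPnv : ∀ z : ℂ, DPn.eval z = DP.eval (z + n) := by
    intro z; rw [hDPn, eval_comp]; simp
  have hpv : ∀ x : ℝ, 1 < x → p.eval (x:ℂ) = B x * DP.eval (x:ℂ) := by
    intro x hx
    rw [hrep x hx]
    field_simp [denpoly_eval_ne_zero M a x (by linarith)]
    exact (mul_div_cancel_right₀ _ (denpoly_eval_ne_zero M a x (by linarith))).symm
  have hQv : ∀ (i : ℕ) (z : ℂ), (Q i).eval z = (z + i)^(K+1) := by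
    intro i z; rw [hQ]; simp
  have hSv : ∀ (i : ℕ) (x : ℝ), 0 < x →
      (S i).eval (x:ℂ) = f (x + i) * (((x:ℂ) + i)^(K+1)) := by
    intro i x hx
    rw [hS, hf, eval_finset_sum, Finset.sum_mul]
    apply Finset.sum_congr rfl
    intro k hk
    rw [Finset.mem_range] at hk
    have hne : ((x:ℂ) + i) ≠ 0 := shift_ne_zero x hx i
    have hcast : (((x + (i:ℕ) : ℝ)):ℂ) = (x:ℂ) + i := by push_cast; ring
    rw [hcast]
    simp only [eval_mul, eval_C, eval_pow, eval_add, eval_X]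
    rw [pow_sub₀ _ hne (by omega : k ≤ K+1)]
    field_simp
  -- the main functional identity
  have hkey : ∀ x : ℝ, 1 < x → P1.eval (x:ℂ) = P2.eval (x:ℂ) := by
    intro x hx
    have hx0 : (0:ℝ) < x := by linarith
    have hxn : (1:ℝ) < x + n := by
      have : (0:ℝ) ≤ n := Nat.cast_nonneg n
      linarith
    have e1 : P1.eval (x:ℂ) =
        (B (x + n) - B x) * (DP.eval (x:ℂ) * DP.eval ((x:ℂ) + n) * ∏ i ∈ range n, ((x:ℂ)+i)^(K+1)) := by
      rw [hP1]
      simp only [eval_mul, eval_sub, eval_comp, eval_add, eval_X, eval_C, eval_prod]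
      have hp1 : p.eval ((x:ℂ) + n) = B (x+n) * DP.eval ((x:ℂ)+n) := by
        have := hpv (x + n) hxn
        have hcast : (((x + (n:ℕ) : ℝ)):ℂ) = (x:ℂ) + n := by push_cast; ring
        rw [hcast] at this
        exact this
      rw [hp1, hpv x hx, hDPnv]
      rw [Finset.prod_congr rfl (fun i _ => hQv i (x:ℂ))]
      ring
    have e2 : P2.eval (x:ℂ) =
        (∑ i ∈ range n, f (x + i)) * (DP.eval (x:ℂ) * DP.eval ((x:ℂ) + n) * ∏ i ∈ range n, ((x:ℂ)+i)^(K+1)) := by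
      rw [hP2, eval_finset_sum, Finset.sum_mul]
      apply Finset.sum_congr rfl
      intro i hi
      simp only [eval_mul, eval_prod]
      rw [hSv i x hx0, hDPnv]
      rw [Finset.prod_congr rfl (fun i' _ => hQv i' (x:ℂ))]
      rw [show (∏ i' ∈ range n, ((x:ℂ)+i')^(K+1))
          = ((x:ℂ)+i)^(K+1) * ∏ i' ∈ (range n).erase i, ((x:ℂ)+i')^(K+1) from
        (Finset.mul_prod_erase (range n) _ hi).symm]
      ring
    rw [e1, e2, ← htel n x hx]
  have hPP : P1 = P2 := poly_eq_of_eval P1 P2 hkey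
  -- evaluate at -j₀
  set z₀ : ℂ := -(j₀:ℂ) with hz₀
  have hz₀j : z₀ + j₀ = 0 := by rw [hz₀]; ring
  have hP1z : P1.eval z₀ = 0 := by
    rw [hP1, eval_mul, eval_prod]
    have : (Q j₀).eval z₀ = 0 := by rw [hQv, hz₀j]; simp
    rw [Finset.prod_eq_zero (Finset.mem_range.mpr (by omega : j₀ < n)) this]
    ring
  have hP2z : P2.eval z₀ = c (K+1) * (DP.eval z₀ * DPn.eval z₀ * ∏ i' ∈ (range n).erase j₀, (Q i').eval z₀) := by
    rw [hP2, eval_finset_sum]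
    rw [Finset.sum_eq_single j₀]
    · have hSz : (S j₀).eval z₀ = c (K+1) := by
        rw [hS, eval_finset_sum]
        rw [Finset.sum_eq_single (K+1)]
        · simp [hz₀j]
        · intro k hk hkne
          rw [Finset.mem_range] at hk
          simp only [eval_mul, eval_C, eval_pow, eval_add, eval_X]
          rw [show z₀ + (j₀:ℂ) = 0 from hz₀j]
          rw [zero_pow (by omega : K+1-k ≠ 0)]
          ring
        · intro h
          exact absurd (Finset.mem_range.mpr (by omega)) h
      simp only [eval_mul, eval_prod]
      rw [hSz]
      ring
    · intro i hi hine
      simp only [eval_mul, eval_prod]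
      have : (Q j₀).eval z₀ = 0 := by rw [hQv, hz₀j]; simp
      rw [Finset.prod_eq_zero (Finset.mem_erase.mpr ⟨(Ne.symm hine), Finset.mem_range.mpr (by omega)⟩) this]
      ring
    · intro h
      exact absurd (Finset.mem_range.mpr (by omega)) h
  have hnz : DP.eval z₀ * DPn.eval z₀ * ∏ i' ∈ (range n).erase j₀, (Q i').eval z₀ ≠ 0 := by
    apply mul_ne_zero
    apply mul_ne_zero
    · rw [hz₀]
      exact denpoly_eval_ne_zero_neg M a j₀ (by omega)
    · rw [hDPnv, show z₀ + (n:ℂ) = ((1:ℝ):ℂ) by rw [hz₀, hn, hj₀]; push_cast; ring]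
      exact denpoly_eval_ne_zero M a 1 one_pos
    · apply Finset.prod_ne_zero_iff.mpr
      intro i hi
      rw [hQv]
      apply pow_ne_zero
      intro hcon
      have : (i:ℂ) = (j₀:ℂ) := by rw [hz₀] at hcon; linear_combination hcon
      have : i = j₀ := by exact_mod_cast this
      exact (Finset.mem_erase.mp hi).1 this
  have := hP1z ▸ hPP ▸ hP2z
  have h0 : c (K+1) * (DP.eval z₀ * DPn.eval z₀ * ∏ i' ∈ (range n).erase j₀, (Q i').eval z₀) = 0 := by
    rw [← hP2z, ← hPP, hP1z]
  exact (mul_eq_zero.mp h0).resolve_right hnz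

/-- The pole lemma. -/
lemma pole_lemma (K : ℕ) (c : ℕ → ℂ) (hc0 : c 0 = 0) (B : ℝ → ℂ) (hB : Nice B)
    (heq : ∀ x : ℝ, 1 < x →
      (∑ k ∈ range (K+1), c k * (((x:ℂ))^k)⁻¹) + (B x - B (x+1)) = 0) :
    ∀ k, k ≤ K → c k = 0 := by
  induction K with
  | zero =>
    intro k hk
    interval_cases k
    exact hc0
  | succ K ih =>
    have htop : c (K+1) = 0 := top_vanish K c B hB heq
    intro k hk
    rcases Nat.eq_or_lt_of_le hk with h | h
    · rw [h]; exact htop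
    · apply ih _ k (by omega)
      intro x hx
      have := heq x hx
      rw [Finset.sum_range_succ, htop] at this
      simpa using this

/-- Master difference lemma -/
lemma delta_master (t : List ℕ) (hadm : Adm t) (A : ℝ → ℂ) (x : ℝ) (hx : 1 < x) :
    A x * fz t x - A (x+1) * fz t (x+1) =
      (A x - A (x+1)) * fz t x +
      ∑ j ∈ range t.length,
        ((-1:ℂ))^j * (((x:ℂ) ^ ((t.take (j+1)).sum))⁻¹) * A (x+1) * fz (t.drop (j+1)) x := by
  rw [fz_shift t hadm x hx.le]
  rw [Finset.sum_range_succ'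
    (fun j => ((-1:ℂ))^j * (((x:ℂ) ^ ((t.take j).sum))⁻¹) * fz (t.drop j) x) t.length]
  simp only [pow_zero, List.take_zero, List.sum_nil, inv_one, one_mul, List.drop_zero]
  rw [mul_add, Finset.mul_sum]
  have hterm : ∀ j ∈ range t.length,
      A (x+1) * (((-1:ℂ))^(j+1) * (((x:ℂ) ^ ((t.take (j+1)).sum))⁻¹) * fz (t.drop (j+1)) x)
        = -(((-1:ℂ))^j * (((x:ℂ) ^ ((t.take (j+1)).sum))⁻¹) * A (x+1) * fz (t.drop (j+1)) x) := by
    intro j _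
    ring
  rw [Finset.sum_congr rfl hterm, Finset.sum_neg_distrib]
  ring

/-- derived index set -/
def Tder (T : Finset (List ℕ)) : Finset (List ℕ) :=
  T.biUnion (fun t => (range (t.length+1)).image (fun j => t.drop j))

lemma mem_Tder {T : Finset (List ℕ)} {t : List ℕ} (ht : t ∈ T) {j : ℕ}
    (hj : j ≤ t.length) : t.drop j ∈ Tder T := by
  rw [Tder, Finset.mem_biUnion]
  exact ⟨t, ht, Finset.mem_image.mpr ⟨j, Finset.mem_range.mpr (by omega), rfl⟩⟩

lemma self_mem_Tder {T : Finset (List ℕ)} {t : List ℕ} (ht : t ∈ T) : t ∈ Tder T := by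
  have := mem_Tder ht (Nat.zero_le t.length)
  simpa using this

lemma Tder_spec {T : Finset (List ℕ)} {w : List ℕ} (hw : w ∈ Tder T) :
    ∃ t ∈ T, ∃ j, j ≤ t.length ∧ w = t.drop j := by
  rw [Tder, Finset.mem_biUnion] at hw
  obtain ⟨t, ht, hw⟩ := hw
  obtain ⟨j, hj, rfl⟩ := Finset.mem_image.mp hw
  refine ⟨t, ht, j, ?_, rfl⟩
  have := Finset.mem_range.mp hj
  omega

/-- derived coefficients -/
def Ader (T : Finset (List ℕ)) (A : List ℕ → ℝ → ℂ) (w : List ℕ) (x : ℝ) : ℂ :=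
  (∑ t ∈ T, ∑ j ∈ range t.length,
    (if t.drop (j+1) = w then ((-1:ℂ))^j * (((x:ℂ) ^ ((t.take (j+1)).sum))⁻¹) * A t (x+1) else 0))
  + (if w ∈ T then A w x - A w (x+1) else 0)

lemma Ader_nice (T : Finset (List ℕ)) (A : List ℕ → ℝ → ℂ)
    (hA : ∀ t ∈ T, Nice (A t)) (w : List ℕ) : Nice (Ader T A w) := by
  classical
  apply Nice.add
  · apply Nice.finset_sum
    intro t ht
    apply Nice.finset_sum
    intro j _
    by_cases h : t.drop (j+1) = w
    · simp only [if_pos h]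
      exact ((Nice.const (((-1:ℂ))^j)).mul (Nice.xpow_inv _)).mul ((hA t ht).shift)
    · simp only [if_neg h]
      exact Nice.zero
  · by_cases h : w ∈ T
    · simp only [if_pos h]
      exact (hA w h).sub ((hA w h).shift)
    · simp only [if_neg h]
      exact Nice.zero

lemma Ader_relation (T : Finset (List ℕ)) (A : List ℕ → ℝ → ℂ)
    (hT : ∀ t ∈ T, Adm t)
    (hrel : ∀ x : ℝ, 1 < x → ∑ t ∈ T, A t x * fz t x = 0) :
    ∀ x : ℝ, 1 < x → ∑ w ∈ Tder T, Ader T A w x * fz w x = 0 := by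
  classical
  intro x hx
  have hx1 : (1:ℝ) < x + 1 := by linarith
  have expand : ∀ w ∈ Tder T, Ader T A w x * fz w x =
      (∑ t ∈ T, ∑ j ∈ range t.length,
        (if t.drop (j+1) = w then
          ((-1:ℂ))^j * (((x:ℂ) ^ ((t.take (j+1)).sum))⁻¹) * A t (x+1) * fz w x else 0))
      + (if w ∈ T then (A w x - A w (x+1)) * fz w x else 0) := by
    intro w _
    rw [Ader, add_mul, Finset.sum_mul]
    congr 1
    · apply Finset.sum_congr rfl
      intro t _
      rw [Finset.sum_mul]
      apply Finset.sum_congr rfl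
      intro j _
      rw [ite_mul, zero_mul]
    · rw [ite_mul, zero_mul]
  rw [Finset.sum_congr rfl expand, Finset.sum_add_distrib]
  have part2 : (∑ w ∈ Tder T, if w ∈ T then (A w x - A w (x+1)) * fz w x else 0)
      = ∑ t ∈ T, (A t x - A t (x+1)) * fz t x := by
    rw [Finset.sum_ite_mem]
    congr 1
    rw [Finset.inter_eq_right]
    intro t ht
    exact self_mem_Tder ht
  have part1 : (∑ w ∈ Tder T, ∑ t ∈ T, ∑ j ∈ range t.length,
      (if t.drop (j+1) = w then
        ((-1:ℂ))^j * (((x:ℂ) ^ ((t.take (j+1)).sum))⁻¹) * A t (x+1) * fz w x else 0))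
      = ∑ t ∈ T, ∑ j ∈ range t.length,
        ((-1:ℂ))^j * (((x:ℂ) ^ ((t.take (j+1)).sum))⁻¹) * A t (x+1) * fz (t.drop (j+1)) x := by
    rw [Finset.sum_comm]
    apply Finset.sum_congr rfl
    intro t ht
    rw [Finset.sum_comm]
    apply Finset.sum_congr rfl
    intro j hj
    have hmem : t.drop (j+1) ∈ Tder T :=
      mem_Tder ht (by rw [Finset.mem_range] at hj; omega)
    rw [Finset.sum_ite_eq (Tder T) (t.drop (j+1))
      (fun w => ((-1:ℂ))^j * (((x:ℂ) ^ ((t.take (j+1)).sum))⁻¹) * A t (x+1) * fz w x)]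
    rw [if_pos hmem]
  rw [part1, part2]
  have hcomb : ∀ t ∈ T,
      ((∑ j ∈ range t.length,
          ((-1:ℂ))^j * (((x:ℂ) ^ ((t.take (j+1)).sum))⁻¹) * A t (x+1) * fz (t.drop (j+1)) x)
        + (A t x - A t (x+1)) * fz t x)
      = A t x * fz t x - A t (x+1) * fz t (x+1) := by
    intro t ht
    rw [add_comm, ← delta_master t (hT t ht) (A t) x hx]
  rw [← Finset.sum_add_distrib]
  rw [Finset.sum_congr rfl hcomb]
  rw [Finset.sum_sub_distrib]
  rw [hrel x hx, hrel (x+1) hx1]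
  ring

lemma Nice.polyEval (P : Polynomial ℂ) : Nice (fun x : ℝ => P.eval (x:ℂ)) :=
  ⟨P, 0, fun _ => 0, fun x _ => by simp [denpoly]⟩

lemma Nice.one : Nice (fun _ : ℝ => (1:ℂ)) := Nice.const 1

lemma Nice.finset_prod {ι : Type*} (s : Finset ι) (f : ι → ℝ → ℂ)
    (hf : ∀ i ∈ s, Nice (f i)) : Nice (fun x => ∏ i ∈ s, f i x) := by
  classical
  induction s using Finset.induction with
  | empty => simpa using Nice.one
  | @insert i s' hni ih =>
    rw [show (fun x => ∏ j ∈ insert i s', f j x)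
        = (fun x => f i x * ∏ j ∈ s', f j x) from funext fun x => Finset.prod_insert hni]
    exact (hf i (Finset.mem_insert_self i s')).mul
      (ih fun j hj => hf j (Finset.mem_insert_of_mem hj))

/-- difference operator drops polynomial degree -/
lemma natDegree_delta (P : Polynomial ℂ) (D : ℕ) (hD : P.natDegree ≤ D + 1) :
    (P - P.comp (Polynomial.X + Polynomial.C 1)).natDegree ≤ D := by
  by_cases h0 : P - P.comp (Polynomial.X + Polynomial.C 1) = 0
  · rw [h0]; simp
  · have hP0 : P ≠ 0 := by
      intro h; apply h0; rw [h]; simp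
    have hq : (Polynomial.X + Polynomial.C (1:ℂ)).natDegree = 1 := by
      simpa using Polynomial.natDegree_X_add_C (1:ℂ)
    have hdc : (P.comp (Polynomial.X + Polynomial.C 1)).natDegree = P.natDegree := by
      rw [Polynomial.natDegree_comp, hq, mul_one]
    have hlc : P.leadingCoeff = (P.comp (Polynomial.X + Polynomial.C 1)).leadingCoeff := by
      rw [Polynomial.leadingCoeff_comp (by rw [hq]; norm_num)]
      have : (Polynomial.X + Polynomial.C (1:ℂ)).leadingCoeff = 1 := by
        exact Polynomial.monic_X_add_C (1:ℂ)
      rw [this, one_pow, mul_one]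
    have hcomp0 : P.comp (Polynomial.X + Polynomial.C 1) ≠ 0 := by
      intro h
      apply hP0
      have := hlc
      rw [h] at this
      simp only [Polynomial.leadingCoeff_zero] at this
      exact Polynomial.leadingCoeff_eq_zero.mp this
    have hdeq : P.degree = (P.comp (Polynomial.X + Polynomial.C 1)).degree := by
      rw [Polynomial.degree_eq_natDegree hP0, Polynomial.degree_eq_natDegree hcomp0, hdc]
    have hlt := Polynomial.degree_sub_lt hdeq hP0 hlc
    have hlt2 : (P - P.comp (Polynomial.X + Polynomial.C 1)).natDegree < P.natDegree := by
      apply Polynomial.natDegree_lt_natDegree h0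
      rwa [Polynomial.degree_eq_natDegree hP0] at hlt ⊢
    omega

lemma poly_const_of_eval_shift (P : Polynomial ℂ)
    (h : ∀ x : ℝ, 1 < x → P.eval ((x:ℂ)+1) = P.eval (x:ℂ)) : ∃ c, P = Polynomial.C c := by
  have hcomp : P.comp (Polynomial.X + Polynomial.C 1) = P := by
    apply poly_eq_of_eval
    intro x hx
    rw [Polynomial.eval_comp]
    simpa using h x hx
  have hshift : ∀ z : ℂ, P.eval (z+1) = P.eval z := by
    intro z
    conv_rhs => rw [← hcomp]
    rw [Polynomial.eval_comp]
    simp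
  have hind : ∀ m : ℕ, P.eval ((2:ℂ) + m) = P.eval 2 := by
    intro m
    induction m with
    | zero => simp
    | succ m ih =>
      have : ((2:ℂ) + (m+1:ℕ)) = ((2:ℂ) + m) + 1 := by push_cast; ring
      rw [this, hshift, ih]
  have hQ : P - Polynomial.C (P.eval 2) = 0 := by
    apply Polynomial.eq_zero_of_infinite_isRoot
    apply Set.Infinite.mono (s := Set.range (fun m : ℕ => (2:ℂ) + m))
    · rintro z ⟨m, rfl⟩
      simp only [Set.mem_setOf_eq, Polynomial.IsRoot.def, Polynomial.eval_sub,
        Polynomial.eval_C]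
      rw [hind m]
      ring
    · apply Set.infinite_range_of_injective
      intro a b hab
      have h2 : (2:ℂ) + a = 2 + b := hab
      have : (a:ℂ) = b := by linear_combination h2
      exact_mod_cast this
  exact ⟨P.eval 2, by linear_combination hQ⟩

def MainStmt (r : ℕ) : Prop := ∀ (T : Finset (List ℕ)), (∀ t ∈ T, Adm t ∧ t.length ≤ r) →
  ∀ A : List ℕ → ℝ → ℂ, (∀ t ∈ T, Nice (A t)) →
  (∀ x : ℝ, 1 < x → ∑ t ∈ T, A t x * fz t x = 0) →
  ∀ t ∈ T, ∀ x : ℝ, 1 < x → A t x = 0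

def TopStmt (r D : ℕ) : Prop := ∀ (T : Finset (List ℕ)), (∀ t ∈ T, Adm t ∧ t.length ≤ r+1) →
  ∀ A : List ℕ → ℝ → ℂ, (∀ t ∈ T, Nice (A t)) →
  (∀ t ∈ T, t.length = r+1 →
    ∃ P : Polynomial ℂ, P.natDegree ≤ D ∧ ∀ x : ℝ, 1 < x → A t x = P.eval (x:ℂ)) →
  (∀ x : ℝ, 1 < x → ∑ t ∈ T, A t x * fz t x = 0) →
  ∀ t ∈ T, t.length = r+1 → ∀ x : ℝ, 1 < x → A t x = 0

lemma Ader_top {T : Finset (List ℕ)} {A : List ℕ → ℝ → ℂ} {r : ℕ}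
    (hT : ∀ t ∈ T, t.length ≤ r+1) {w : List ℕ} (hw : w.length = r+1) (x : ℝ) :
    Ader T A w x = if w ∈ T then A w x - A w (x+1) else 0 := by
  rw [Ader]
  rw [Finset.sum_eq_zero, zero_add]
  intro t ht
  apply Finset.sum_eq_zero
  intro j hj
  rw [if_neg]
  intro hcon
  have h1 := congrArg List.length hcon
  rw [List.length_drop] at h1
  have h2 := hT t ht
  omega

lemma Tder_bound {T : Finset (List ℕ)} {r : ℕ} (hT : ∀ t ∈ T, Adm t ∧ t.length ≤ r) :
    ∀ w ∈ Tder T, Adm w ∧ w.length ≤ r := by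
  intro w hw
  obtain ⟨t, ht, j, hj, rfl⟩ := Tder_spec hw
  refine ⟨(hT t ht).1.drop j, ?_⟩
  rw [List.length_drop]
  have := (hT t ht).2
  omega

lemma main_zero : MainStmt 0 := by
  intro T hT A hA hrel t ht x hx
  have hnil : t = [] := List.length_eq_zero_iff.mp (Nat.le_zero.mp (hT t ht).2)
  subst hnil
  have hT1 : T = {[]} := by
    apply Finset.eq_singleton_iff_unique_mem.mpr
    exact ⟨ht, fun y hy => List.length_eq_zero_iff.mp (Nat.le_zero.mp (hT y hy).2)⟩
  have := hrel x hx
  rw [hT1, Finset.sum_singleton, fz_nil, mul_one] at this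
  exact this

lemma top_zero (r : ℕ) (hmain : MainStmt r) : TopStmt r 0 := by
  classical
  intro T hT A hA hpoly hrel
  -- constants for top coefficients
  have hconst' : ∀ t : List ℕ, ∃ c : ℂ,
      t ∈ T → t.length = r+1 → ∀ x : ℝ, 1 < x → A t x = c := by
    intro t
    by_cases ht : t ∈ T ∧ t.length = r+1
    · obtain ⟨P, hP0, hPe⟩ := hpoly t ht.1 ht.2
      refine ⟨P.coeff 0, fun _ _ x hx => ?_⟩
      rw [hPe x hx]
      conv_lhs => rw [Polynomial.eq_C_of_natDegree_le_zero hP0]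
      simp
    · exact ⟨0, fun h1 h2 => absurd ⟨h1, h2⟩ ht⟩
  choose cval hcval using hconst'
  -- the derived relation
  have hrel' := Ader_relation T A (fun t ht => (hT t ht).1) hrel
  have htop0 : ∀ w : List ℕ, w.length = r+1 → ∀ x : ℝ, 1 < x → Ader T A w x = 0 := by
    intro w hw x hx
    rw [Ader_top (fun t ht => (hT t ht).2) hw]
    by_cases hmem : w ∈ T
    · rw [if_pos hmem, hcval w hmem hw x hx, hcval w hmem hw (x+1) (by linarith)]
      ring
    · rw [if_neg hmem]
  set T'' := (Tder T).filter (fun w => w.length ≤ r) with hT''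
  have hrel'' : ∀ x : ℝ, 1 < x → ∑ w ∈ T'', Ader T A w x * fz w x = 0 := by
    intro x hx
    have hsplit := Finset.sum_filter_add_sum_filter_not (Tder T) (fun w => w.length ≤ r)
      (fun w => Ader T A w x * fz w x)
    have hzero : ∑ w ∈ (Tder T).filter (fun w => ¬ w.length ≤ r),
        Ader T A w x * fz w x = 0 := by
      apply Finset.sum_eq_zero
      intro w hw
      rw [Finset.mem_filter] at hw
      have hlen : w.length = r+1 := by
        have := (Tder_bound (fun t ht => ⟨(hT t ht).1, (hT t ht).2⟩) w hw.1).2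
        omega
      rw [htop0 w hlen x hx, zero_mul]
    rw [← hrel' x hx, ← hsplit, hzero, add_zero]
  have happ := hmain T''
    (fun w hw => by
      rw [hT'', Finset.mem_filter] at hw
      exact ⟨(Tder_bound (fun t ht => ⟨(hT t ht).1, (hT t ht).2⟩) w hw.1).1, hw.2⟩)
    (Ader T A) (fun w _ => Ader_nice T A hA w) hrel''
  -- extract
  intro t₀ ht₀ hlen x hx
  cases t₀ with
  | nil => simp at hlen
  | cons k₀ w =>
    have hwlen : w.length = r := by
      have := hlen; simp at this; omega
    have hwmem : w ∈ T'' := by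
      rw [hT'', Finset.mem_filter]
      constructor
      · have := mem_Tder ht₀ (j := 1) (by simp)
        simpa using this
      · omega
    have hAw : ∀ y : ℝ, 1 < y → Ader T A w y = 0 := happ w hwmem
    -- set up pole lemma
    set B : ℝ → ℂ := fun y => if w ∈ T then A w y else 0 with hB
    have hBnice : Nice B := by
      by_cases hmem : w ∈ T
      · simpa [hB, if_pos hmem] using hA w hmem
      · simpa [hB, if_neg hmem] using Nice.zero
    set KK := T.sup (fun t => t.headI) with hKK
    set cc : ℕ → ℂ := fun k => if (k::w) ∈ T ∧ 1 ≤ k then cval (k::w) else 0 with hcc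
    have hcc0 : cc 0 = 0 := by
      show (if (0::w) ∈ T ∧ 1 ≤ 0 then cval (0::w) else 0) = 0
      simp
    -- the inner sum computation
    have hinner : ∀ y : ℝ, 1 < y → ∀ t ∈ T,
        (∑ j ∈ range t.length,
          (if t.drop (j+1) = w then
            ((-1:ℂ))^j * (((y:ℂ) ^ ((t.take (j+1)).sum))⁻¹) * A t (y+1) else 0))
        = if t.length = r+1 ∧ t.drop 1 = w then
            (((y:ℂ) ^ ((t.take 1).sum))⁻¹) * A t (y+1) else 0 := by
      intro y hy t ht
      by_cases hc : t.length = r+1 ∧ t.drop 1 = w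
      · rw [if_pos hc, Finset.sum_eq_single 0]
        · rw [if_pos hc.2]
          norm_num
        · intro j hj hj0
          rw [if_neg]
          intro hcon
          have h1 := congrArg List.length hcon
          rw [List.length_drop] at h1
          have h2 := Finset.mem_range.mp hj
          omega
        · intro hcon
          exact absurd (Finset.mem_range.mpr (by omega)) hcon
      · rw [if_neg hc]
        apply Finset.sum_eq_zero
        intro j hj
        rw [if_neg]
        intro hcon
        have h1 := congrArg List.length hcon
        rw [List.length_drop] at h1
        have h2 := Finset.mem_range.mp hj
        have h3 := (hT t ht).2
        have hj0 : j = 0 := by omega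
        subst hj0
        exact hc ⟨by omega, hcon⟩
    -- helper: shape of top tuples ending in w
    have hform : ∀ t : List ℕ, t.length = r+1 → t.drop 1 = w → t = t.headI :: w := by
      intro t h1 h2
      cases t with
      | nil => simp at h1
      | cons a s =>
        have : s = w := by simpa using h2
        rw [this]
        rfl
    -- rewrite the head sum as a sum over k
    have hmain_eq : ∀ y : ℝ, 1 < y →
        (∑ t ∈ T, if t.length = r+1 ∧ t.drop 1 = w then
            (((y:ℂ) ^ ((t.take 1).sum))⁻¹) * A t (y+1) else 0)
        = ∑ k ∈ range (KK+1), cc k * (((y:ℂ))^k)⁻¹ := by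
      intro y hy
      rw [← Finset.sum_filter]
      have hrhs : ∀ k ∈ range (KK+1), cc k * (((y:ℂ))^k)⁻¹
          = if (k::w) ∈ T ∧ 1 ≤ k then cval (k::w) * (((y:ℂ))^k)⁻¹ else 0 := by
        intro k _
        show (if (k::w) ∈ T ∧ 1 ≤ k then cval (k::w) else 0) * (((y:ℂ))^k)⁻¹ = _
        by_cases h : (k::w) ∈ T ∧ 1 ≤ k
        · rw [if_pos h, if_pos h]
        · rw [if_neg h, if_neg h, zero_mul]
      rw [Finset.sum_congr rfl hrhs, ← Finset.sum_filter]
      apply Finset.sum_bij' (i := fun t _ => t.headI) (j := fun k _ => k :: w)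
      · -- hi
        intro t hti
        rw [Finset.mem_filter] at hti
        have hform' := hform t hti.2.1 hti.2.2
        rw [Finset.mem_filter, Finset.mem_range]
        have hsup : t.headI ≤ KK := by
          rw [hKK]
          exact Finset.le_sup (f := fun t => t.headI) hti.1
        refine ⟨by omega, ?_, ?_⟩
        · rw [← hform']; exact hti.1
        · have hadm : Adm t := (hT t hti.1).1
          rw [hform'] at hadm
          exact hadm.head
      · -- hj
        intro k hk
        rw [Finset.mem_filter] at hk
        rw [Finset.mem_filter]
        refine ⟨hk.2.1, by simp [hwlen], by simp⟩
      · -- left inverse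
        intro t hti
        rw [Finset.mem_filter] at hti
        exact (hform t hti.2.1 hti.2.2).symm
      · -- right inverse
        intro k _
        rfl
      · -- values
        intro t hti
        rw [Finset.mem_filter] at hti
        have hform' := hform t hti.2.1 hti.2.2
        have hmem' : (t.headI :: w) ∈ T := by rw [← hform']; exact hti.1
        have hval := hcval (t.headI :: w) hmem' (by simp [hwlen]) (y+1) (by linarith)
        rw [show ((t.take 1).sum) = t.headI from by
          rw [hform']; simp]
        rw [show A t (y+1) = cval (t.headI :: w) from by rw [hform']; exact hval]
        ring
    -- assemble the pole-lemma identity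
    have hPLid : ∀ y : ℝ, 1 < y →
        (∑ k ∈ range (KK+1), cc k * (((y:ℂ))^k)⁻¹) + (B y - B (y+1)) = 0 := by
      intro y hy
      have h0 := hAw y hy
      rw [Ader] at h0
      rw [Finset.sum_congr rfl (fun t ht => hinner y hy t ht)] at h0
      rw [hmain_eq y hy] at h0
      have hsecond : (if w ∈ T then A w y - A w (y+1) else 0) = B y - B (y+1) := by
        show _ = (if w ∈ T then A w y else 0) - (if w ∈ T then A w (y+1) else 0)
        by_cases hmem : w ∈ T
        · rw [if_pos hmem, if_pos hmem, if_pos hmem]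
        · rw [if_neg hmem, if_neg hmem, if_neg hmem]; ring
      rw [hsecond] at h0
      exact h0
    have hccz := pole_lemma KK cc hcc0 B hBnice hPLid
    -- conclude
    have hk₀T : (k₀ :: w) ∈ T := ht₀
    have hk₀1 : 1 ≤ k₀ := ((hT _ ht₀).1).head
    have hk₀KK : k₀ ≤ KK := by
      rw [hKK]
      have := Finset.le_sup (f := fun t => t.headI) ht₀
      simpa using this
    have hcck : cc k₀ = cval (k₀ :: w) := by
      show (if (k₀::w) ∈ T ∧ 1 ≤ k₀ then cval (k₀::w) else 0) = cval (k₀::w)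
      rw [if_pos ⟨hk₀T, hk₀1⟩]
    rw [hcval (k₀ :: w) ht₀ hlen x hx, ← hcck]
    exact hccz k₀ hk₀KK

lemma top_succ (r D : ℕ) (ih : TopStmt r D) : TopStmt r (D+1) := by
  classical
  intro T hT A hA hpoly hrel
  have hT' : ∀ w ∈ Tder T, Adm w ∧ w.length ≤ r+1 := Tder_bound hT
  have hA' : ∀ w ∈ Tder T, Nice (Ader T A w) := fun w _ => Ader_nice T A hA w
  have hrel' := Ader_relation T A (fun t ht => (hT t ht).1) hrel
  have hpoly' : ∀ w ∈ Tder T, w.length = r+1 →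
      ∃ P : Polynomial ℂ, P.natDegree ≤ D ∧ ∀ x : ℝ, 1 < x → Ader T A w x = P.eval (x:ℂ) := by
    intro w _ hw
    by_cases hmem : w ∈ T
    · obtain ⟨P, hPd, hPe⟩ := hpoly w hmem hw
      refine ⟨P - P.comp (Polynomial.X + Polynomial.C 1), natDegree_delta P D hPd, ?_⟩
      intro x hx
      rw [Ader_top (fun t ht => (hT t ht).2) hw, if_pos hmem]
      rw [hPe x hx, hPe (x+1) (by linarith)]
      simp only [Polynomial.eval_sub, Polynomial.eval_comp, Polynomial.eval_add,
        Polynomial.eval_X, Polynomial.eval_C]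
      push_cast
      ring
    · refine ⟨0, by simp, ?_⟩
      intro x hx
      rw [Ader_top (fun t ht => (hT t ht).2) hw, if_neg hmem]
      simp
  have happ := ih (Tder T) hT' (Ader T A) hA' hpoly' hrel'
  -- tops are constant
  have hconstify : ∀ t ∈ T, t.length = r+1 →
      ∃ P : Polynomial ℂ, P.natDegree ≤ D ∧ ∀ x : ℝ, 1 < x → A t x = P.eval (x:ℂ) := by
    intro t ht hl
    obtain ⟨P, hPd, hPe⟩ := hpoly t ht hl
    have hzero : ∀ x : ℝ, 1 < x → Ader T A t x = 0 :=
      happ t (self_mem_Tder ht) hl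
    have hshiftinv : ∀ x : ℝ, 1 < x → P.eval ((x:ℂ)+1) = P.eval (x:ℂ) := by
      intro x hx
      have h1 := hzero x hx
      rw [Ader_top (fun t ht => (hT t ht).2) hl, if_pos ht] at h1
      rw [hPe x hx, hPe (x+1) (by linarith)] at h1
      have hc : ((x+1 : ℝ) : ℂ) = (x:ℂ)+1 := by push_cast; ring
      rw [hc] at h1
      linear_combination -h1
    obtain ⟨cP, hcP⟩ := poly_const_of_eval_shift P hshiftinv
    refine ⟨P, ?_, hPe⟩
    rw [hcP]
    simp
  exact ih T hT A hA hconstify hrel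

lemma main_succ (r : ℕ) (hmain : MainStmt r) (htop : ∀ D, TopStmt r D) : MainStmt (r+1) := by
  classical
  intro T hT A hA hrel
  -- clear denominators
  have hA2 : ∀ t : List ℕ, ∃ (pp : Polynomial ℂ) (MM : ℕ) (aa : ℕ → ℕ),
      t ∈ T → ∀ x : ℝ, 1 < x → A t x = pp.eval (x:ℂ) / (denpoly MM aa).eval (x:ℂ) := by
    intro t
    by_cases ht : t ∈ T
    · obtain ⟨p, M, a, h⟩ := hA t ht
      exact ⟨p, M, a, fun _ => h⟩
    · exact ⟨0, 0, fun _ => 0, fun h => absurd h ht⟩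
  choose pf Mf af hf using hA2
  set DD : ℝ → ℂ := fun x => ∏ t ∈ T, (denpoly (Mf t) (af t)).eval (x:ℂ) with hDD
  have hDDne : ∀ x : ℝ, 1 < x → DD x ≠ 0 := by
    intro x hx
    show (∏ t ∈ T, (denpoly (Mf t) (af t)).eval (x:ℂ)) ≠ 0
    apply Finset.prod_ne_zero_iff.mpr
    intro t _
    exact denpoly_eval_ne_zero _ _ x (by linarith)
  set A2 : List ℕ → ℝ → ℂ := fun t x => DD x * A t x with hA2def
  have hA2nice : ∀ t ∈ T, Nice (A2 t) := by
    intro t ht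
    apply Nice.mul _ (hA t ht)
    exact Nice.finset_prod T _ (fun t' _ => Nice.polyEval _)
  have hrel2 : ∀ x : ℝ, 1 < x → ∑ t ∈ T, A2 t x * fz t x = 0 := by
    intro x hx
    have : ∀ t ∈ T, A2 t x * fz t x = DD x * (A t x * fz t x) := by
      intro t _
      show (DD x * A t x) * fz t x = _
      ring
    rw [Finset.sum_congr rfl this, ← Finset.mul_sum, hrel x hx, mul_zero]
  set Dbig := T.sup (fun t => (pf t * ∏ t' ∈ T.erase t, denpoly (Mf t') (af t')).natDegree)
    with hDbig
  have hpoly2 : ∀ t ∈ T, t.length = (r+1) →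
      ∃ P : Polynomial ℂ, P.natDegree ≤ Dbig ∧ ∀ x : ℝ, 1 < x → A2 t x = P.eval (x:ℂ) := by
    intro t ht _
    refine ⟨pf t * ∏ t' ∈ T.erase t, denpoly (Mf t') (af t'),
      Finset.le_sup (f := fun t => (pf t * ∏ t' ∈ T.erase t, denpoly (Mf t') (af t')).natDegree) ht, ?_⟩
    intro x hx
    show DD x * A t x = _
    rw [hf t ht x hx]
    rw [Polynomial.eval_mul, Polynomial.eval_prod]
    have hsplit : (∏ t' ∈ T, (denpoly (Mf t') (af t')).eval (x:ℂ))
        = (denpoly (Mf t) (af t)).eval (x:ℂ)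
          * ∏ t' ∈ T.erase t, (denpoly (Mf t') (af t')).eval (x:ℂ) :=
      (Finset.mul_prod_erase T _ ht).symm
    show (∏ t' ∈ T, (denpoly (Mf t') (af t')).eval (x:ℂ)) * _ = _
    rw [hsplit]
    have hne := denpoly_eval_ne_zero (Mf t) (af t) x (by linarith)
    field_simp
  have htopres := htop Dbig T hT A2 hA2nice hpoly2 hrel2
  have htopA : ∀ t ∈ T, t.length = r+1 → ∀ x : ℝ, 1 < x → A t x = 0 := by
    intro t ht hl x hx
    have h1 := htopres t ht hl x hx
    have h2 : DD x * A t x = 0 := h1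
    exact (mul_eq_zero.mp h2).resolve_left (hDDne x hx)
  set T3 := T.filter (fun t => t.length ≤ r) with hT3
  have hrel3 : ∀ x : ℝ, 1 < x → ∑ t ∈ T3, A t x * fz t x = 0 := by
    intro x hx
    have hsplit := Finset.sum_filter_add_sum_filter_not T (fun t => t.length ≤ r)
      (fun t => A t x * fz t x)
    have hzero : ∑ t ∈ T.filter (fun t => ¬ t.length ≤ r), A t x * fz t x = 0 := by
      apply Finset.sum_eq_zero
      intro t ht'
      rw [Finset.mem_filter] at ht'
      have hl : t.length = r+1 := by
        have := (hT t ht'.1).2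
        omega
      rw [htopA t ht'.1 hl x hx, zero_mul]
    rw [← hrel x hx, ← hsplit, hzero, add_zero]
  have hres := hmain T3
    (fun t ht' => by
      rw [hT3, Finset.mem_filter] at ht'
      exact ⟨(hT t ht'.1).1, ht'.2⟩)
    A (fun t ht' => hA t (Finset.mem_filter.mp (hT3 ▸ ht')).1) hrel3
  intro t ht x hx
  by_cases hl : t.length ≤ r
  · exact hres t (by rw [hT3, Finset.mem_filter]; exact ⟨ht, hl⟩) x hx
  · exact htopA t ht (by have := (hT t ht).2; omega) x hx

theorem main_all : ∀ r, MainStmt r := by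
  intro r
  induction r with
  | zero => exact main_zero
  | succ r ihr =>
    have htop : ∀ D, TopStmt r D := by
      intro D
      induction D with
      | zero => exact top_zero r ihr
      | succ D ihD => exact top_succ r D ihD
    exact main_succ r ihr htop

/-- The constant function `1` together with the Hurwitz polyzeta functions form a
linearly independent family over `ℂ` in the space of functions from the half-plane
`{z : ℂ | 0 < Re z}` to `ℂ`. -/
theorem hurwitzPolyzeta_linearIndependent :
    LinearIndependent ℂ
      (fun i : Option HurwitzIndex =>
        Option.elim i ((fun _ => 1) : {z : ℂ // 0 < z.re} → ℂ)
          (fun l => fun z : {z : ℂ // 0 < z.re} =>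
            hurwitzPolyzeta (l.1.map (fun k => (k : ℂ))) z.1)) := by
  classical
  rw [linearIndependent_iff']
  intro s g hsum i hi
  set v : Option HurwitzIndex → {z : ℂ // 0 < z.re} → ℂ :=
    (fun i : Option HurwitzIndex =>
        Option.elim i ((fun _ => 1) : {z : ℂ // 0 < z.re} → ℂ)
          (fun l => fun z : {z : ℂ // 0 < z.re} =>
            hurwitzPolyzeta (l.1.map (fun k => (k : ℂ))) z.1)) with hv
  have hlistcast : ∀ l : List ℕ, (l.map (fun k => (k : ℂ))) = l.map (fun k : ℕ => (k:ℂ)) := by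
    intro l
    induction l with
    | nil => rfl
    | cons a s ih => simpa using ih
  set toL : Option HurwitzIndex → List ℕ := fun o => Option.elim o [] (fun l => l.1) with htoL
  have htoLinj : Function.Injective toL := by
    intro a b hab
    match a, b with
    | none, none => rfl
    | none, some l =>
      exact absurd (show ([] : List ℕ) = l.1 from hab).symm l.2.1
    | some l, none =>
      exact absurd (show l.1 = ([] : List ℕ) from hab) l.2.1
    | some l, some l' =>
      have : l.1 = l'.1 := hab
      rw [show l = l' from Subtype.ext this]
  have hAdmL : ∀ i : Option HurwitzIndex, Adm (toL i) := by
    intro i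
    match i with
    | none => exact Adm.nil
    | some l =>
      obtain ⟨hne, h1, h2⟩ := l.2
      refine ⟨h1, fun h => ?_⟩
      have hD : l.1.getLastD 0 = l.1.getLast h := by
        rw [List.getLastD_eq_getLast?, List.getLast?_eq_getLast (l := l.1) h]
        rfl
      rwa [hD] at h2
  -- key evaluation
  have hval : ∀ (i : Option HurwitzIndex) (x : ℝ) (hx : 1 < x),
      v i ⟨(x:ℂ), by simpa using (by linarith : (0:ℝ) < x)⟩ = fz (toL i) x := by
    intro i x hx
    match i with
    | none =>
      show (1:ℂ) = fz [] x
      rw [fz_nil]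
    | some l =>
      show hurwitzPolyzeta (l.1.map (fun k => (k : ℂ))) (x:ℂ) = fz l.1 x
      rw [hlistcast l.1]
      exact hurwitz_eq l.1 (hAdmL (some l)) x (by linarith)
  set T : Finset (List ℕ) := s.image toL with hT
  set A : List ℕ → ℝ → ℂ :=
    fun t _ => ∑ i' ∈ s.filter (fun i' => toL i' = t), g i' with hA
  set R : ℕ := T.sup List.length with hR
  have hTbound : ∀ t ∈ T, Adm t ∧ t.length ≤ R := by
    intro t ht
    obtain ⟨i', _, rfl⟩ := Finset.mem_image.mp ht
    exact ⟨hAdmL i', Finset.le_sup (f := List.length) ht⟩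
  have hAnice : ∀ t ∈ T, Nice (A t) := fun t _ => Nice.const _
  have hrel : ∀ x : ℝ, 1 < x → ∑ t ∈ T, A t x * fz t x = 0 := by
    intro x hx
    have hz : (0:ℝ) < x := by linarith
    set z : {z : ℂ // 0 < z.re} := ⟨(x:ℂ), by simpa using hz⟩ with hzdef
    have hpt : (∑ i' ∈ s, g i' • v i') z = 0 := by rw [hsum]; rfl
    rw [Finset.sum_apply] at hpt
    have hterm : ∀ i' ∈ s, (g i' • v i') z = g i' * fz (toL i') x := by
      intro i' _
      have : v i' z = fz (toL i') x := hval i' x hx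
      rw [Pi.smul_apply, smul_eq_mul, this]
    rw [Finset.sum_congr rfl hterm] at hpt
    rw [← hpt]
    rw [← Finset.sum_fiberwise_of_maps_to (g := toL) (t := T)
      (fun i' hi' => Finset.mem_image_of_mem toL hi') (fun i' => g i' * fz (toL i') x)]
    apply Finset.sum_congr rfl
    intro t _
    rw [hA]
    show (∑ i' ∈ s.filter (fun i' => toL i' = t), g i') * fz t x = _
    rw [Finset.sum_mul]
    apply Finset.sum_congr rfl
    intro i' hi'
    rw [(Finset.mem_filter.mp hi').2]
  have hconc := main_all R T hTbound A hAnice hrel (toL i)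
    (Finset.mem_image_of_mem toL hi) 2 (by norm_num)
  have hfib : s.filter (fun i' => toL i' = toL i) = {i} := by
    apply Finset.eq_singleton_iff_unique_mem.mpr
    constructor
    · rw [Finset.mem_filter]; exact ⟨hi, rfl⟩
    · intro j hj
      rw [Finset.mem_filter] at hj
      exact htoLinj hj.2
  have : A (toL i) 2 = g i := by
    rw [hA]
    show (∑ i' ∈ s.filter (fun i' => toL i' = toL i), g i') = g i
    rw [hfib, Finset.sum_singleton]
  rw [← this]
  exact hconc
end
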